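/- arXiv:2511.03529 — 2 statements merged into one kernel-verified Lean document; each statement's English description precedes it below -/
import Mathlib

section
/- Let n ≥ 2, s ∈ {1,…,n}, t ∈ (0,1] with s·t ≥ 1, and let h ∈ ℝⁿ. Let S* ⊆ {1,…,n} be a set of indices of s largest entries of h (by value), let u ∈ ℝ^{S*} be the Euclidean projection of the restriction of h to S* onto the unit-capped simplex Δ⁺_t = {u : Σ_i u_i = 1, 0 ≤ u_i ≤ t}, and define w ∈ ℝⁿ by w_i = u_i for i ∈ S* and w_i = 0 for i ∉ S*. Then w is a minimizer of ‖w′ − h‖₂² over all w′ in the sparse unit-capped simplex Δ⁺_{t,ℓ₀}; i.e., the three-step procedure (select the s largest entries, take their support, project onto the unit-capped simplex on that support) exactly solves the projection of h onto Δ⁺_{t,ℓ₀}. -/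
/-- The sparse unit-capped simplex `Δ⁺_{t,ℓ₀} ⊆ ℝⁿ`. -/
def sparseCappedSimplex (n : ℕ) (t : ℝ) (s : ℕ) : Set (Fin n → ℝ) :=
  {w | (∑ i, w i) = 1 ∧ (∀ i, 0 ≤ w i ∧ w i ≤ t) ∧
       ∃ S : Finset (Fin n), S.card ≤ s ∧ ∀ i ∉ S, w i = 0}

/-- The three-step projection (select `s` largest entries of `h`, keep that support, project the
restriction onto the unit-capped simplex `Δ⁺_t`) exactly solves the Euclidean projection of `h`
onto the sparse unit-capped simplex `Δ⁺_{t,ℓ₀}`.  Here `S` is a set of indices of `s` largest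
entries of `h`, and `u` (supported on `S`) is the Euclidean projection of the restriction of `h`
to `S` onto the unit-capped simplex on `S`; extending `u` by zero off `S` gives exactly `u`. -/
theorem stmt2 (n s : ℕ) (t : ℝ) (hn : 2 ≤ n) (hs1 : 1 ≤ s) (hsn : s ≤ n)
    (ht0 : 0 < t) (ht1 : t ≤ 1) (hst : 1 ≤ (s : ℝ) * t)
    (h : Fin n → ℝ) (S : Finset (Fin n)) (hScard : S.card = s)
    (hSlargest : ∀ i ∈ S, ∀ j ∉ S, h j ≤ h i)
    (u : Fin n → ℝ)
    (hu_supp : ∀ i ∉ S, u i = 0)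
    (hu_sum : ∑ i ∈ S, u i = 1)
    (hu_bdd : ∀ i ∈ S, 0 ≤ u i ∧ u i ≤ t)
    (hu_min : ∀ u' : Fin n → ℝ, (∑ i ∈ S, u' i = 1) → (∀ i ∈ S, 0 ≤ u' i ∧ u' i ≤ t) →
      ∑ i ∈ S, (u i - h i) ^ 2 ≤ ∑ i ∈ S, (u' i - h i) ^ 2) :
    u ∈ sparseCappedSimplex n t s ∧
      ∀ w' ∈ sparseCappedSimplex n t s,
        ∑ i, (u i - h i) ^ 2 ≤ ∑ i, (w' i - h i) ^ 2 := by
  classical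
  haveI : Nonempty (Fin n) := ⟨⟨0, by omega⟩⟩
  have hu_mem : u ∈ sparseCappedSimplex n t s := by
    refine ⟨?_, ?_, S, hScard.le, hu_supp⟩
    · rw [← Finset.sum_subset (Finset.subset_univ S) (fun x _ hx => hu_supp x hx)]
      exact hu_sum
    · intro i
      by_cases hi : i ∈ S
      · exact hu_bdd i hi
      · rw [hu_supp i hi]; exact ⟨le_refl 0, le_of_lt ht0⟩
  refine ⟨hu_mem, ?_⟩
  intro w' hw'
  obtain ⟨hw'sum, hw'bdd, T, hTcard, hTsupp⟩ := hw'
  -- cardinality comparison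
  have hcard : (T \ S).card ≤ (S \ T).card := by
    have h1 := Finset.card_sdiff_add_card_inter T S
    have h2 := Finset.card_sdiff_add_card_inter S T
    have h3 : (T ∩ S).card = (S ∩ T).card := by rw [Finset.inter_comm]
    omega
  have hemb : Nonempty ((T \ S : Finset (Fin n)) ↪ (S \ T : Finset (Fin n))) := by
    rw [Function.Embedding.nonempty_iff_card_le, Fintype.card_coe, Fintype.card_coe]
    exact hcard
  obtain ⟨e⟩ := hemb
  set ψ : Fin n → Fin n := fun j => if hj : j ∈ T \ S then (e ⟨j, hj⟩ : Fin n) else j with hψdef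
  have hψ_sdiff : ∀ j (hj : j ∈ T \ S), ψ j ∈ S \ T ∧ ψ j = (e ⟨j, hj⟩ : Fin n) := by
    intro j hj
    have : ψ j = (e ⟨j, hj⟩ : Fin n) := by simp only [hψdef, dif_pos hj]
    exact ⟨this ▸ (e ⟨j, hj⟩).2, this⟩
  have hψ_id : ∀ j, j ∉ T \ S → ψ j = j := by
    intro j hj; simp only [hψdef, dif_neg hj]
  have hψS : ∀ j ∈ T, ψ j ∈ S := by
    intro j hj
    by_cases hjs : j ∈ T \ S
    · exact Finset.mem_sdiff.mp (hψ_sdiff j hjs).1 |>.1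
    · rw [hψ_id j hjs]
      by_contra hjS
      exact hjs (Finset.mem_sdiff.mpr ⟨hj, hjS⟩)
  have hψh : ∀ j ∈ T, h j ≤ h (ψ j) := by
    intro j hj
    by_cases hjs : j ∈ T \ S
    · exact hSlargest (ψ j) (hψS j hj) j (Finset.mem_sdiff.mp hjs).2
    · rw [hψ_id j hjs]
  have hψinj : ∀ j ∈ T, ∀ k ∈ T, ψ j = ψ k → j = k := by
    intro j hj k hk hjk
    by_cases hjs : j ∈ T \ S <;> by_cases hks : k ∈ T \ S
    · obtain ⟨_, hje⟩ := hψ_sdiff j hjs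
      obtain ⟨_, hke⟩ := hψ_sdiff k hks
      have : e ⟨j, hjs⟩ = e ⟨k, hks⟩ := Subtype.ext (by rw [← hje, ← hke, hjk])
      exact congrArg Subtype.val (e.injective this)
    · obtain ⟨hmem, _⟩ := hψ_sdiff j hjs
      rw [hψ_id k hks] at hjk
      exact absurd (hjk ▸ hmem) (by simp [Finset.mem_sdiff, hk])
    · obtain ⟨hmem, _⟩ := hψ_sdiff k hks
      rw [hψ_id j hjs] at hjk
      exact absurd (hjk ▸ hmem) (by simp [Finset.mem_sdiff, hj])
    · rw [hψ_id j hjs, hψ_id k hks] at hjk; exact hjk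
  -- build the moved vector W, supported on S
  set W : Fin n → ℝ := fun i => ∑ j ∈ T, if ψ j = i then w' j else 0 with hWdef
  have hWfilter : ∀ i, W i = ∑ j ∈ T.filter (fun j => ψ j = i), w' j := by
    intro i; rw [hWdef]; exact (Finset.sum_filter _ _).symm
  have hFcases : ∀ i, T.filter (fun j => ψ j = i) = ∅ ∨
      ∃ x ∈ T, T.filter (fun j => ψ j = i) = {x} := by
    intro i
    have hle : (T.filter (fun j => ψ j = i)).card ≤ 1 := by
      rw [Finset.card_le_one]
      intro a ha b hb
      obtain ⟨haT, hai⟩ := Finset.mem_filter.mp ha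
      obtain ⟨hbT, hbi⟩ := Finset.mem_filter.mp hb
      exact hψinj a haT b hbT (hai.trans hbi.symm)
    rcases Finset.card_le_one_iff_subset_singleton.mp hle with ⟨x, hx⟩
    rcases Finset.subset_singleton_iff.mp hx with he | he
    · exact Or.inl he
    · refine Or.inr ⟨x, ?_, he⟩
      have : x ∈ T.filter (fun j => ψ j = i) := he ▸ Finset.mem_singleton_self x
      exact (Finset.mem_filter.mp this).1
  have hW_nonneg : ∀ i, 0 ≤ W i := by
    intro i
    apply Finset.sum_nonneg
    intro j _
    split
    · exact (hw'bdd j).1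
    · exact le_refl 0
  have hW_le : ∀ i, W i ≤ t := by
    intro i
    rw [hWfilter]
    rcases hFcases i with he | ⟨x, _, he⟩
    · rw [he, Finset.sum_empty]; exact ht0.le
    · rw [he, Finset.sum_singleton]; exact (hw'bdd x).2
  have hW_zero_off : ∀ i ∉ S, W i = 0 := by
    intro i hi
    apply Finset.sum_eq_zero
    intro j hj
    have : ψ j ≠ i := fun hc => hi (hc ▸ hψS j hj)
    simp [this]
  have hw'T : ∑ j ∈ T, w' j = 1 := by
    rw [Finset.sum_subset (Finset.subset_univ T) (fun x _ hx => hTsupp x hx)]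
    exact hw'sum
  have hWsumS : ∑ i ∈ S, W i = 1 := by
    rw [hWdef]
    rw [Finset.sum_comm]
    rw [← hw'T]
    apply Finset.sum_congr rfl
    intro j hj
    rw [Finset.sum_ite_eq S (ψ j) (fun _ => w' j)]
    simp [hψS j hj]
  -- key sum identities
  have hA1 : ∑ i, (W i) ^ 2 = ∑ j ∈ T, (w' j) ^ 2 := by
    have hsq : ∀ i, (W i) ^ 2 = ∑ j ∈ T, if ψ j = i then (w' j) ^ 2 else 0 := by
      intro i
      rw [← Finset.sum_filter]
      rw [hWfilter]
      rcases hFcases i with he | ⟨x, _, he⟩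
      · rw [he]; simp
      · rw [he]; simp
    rw [Finset.sum_congr rfl (fun i _ => hsq i), Finset.sum_comm]
    apply Finset.sum_congr rfl
    intro j _
    rw [Finset.sum_ite_eq Finset.univ (ψ j) (fun _ => (w' j) ^ 2)]
    simp
  have hA2 : ∑ i, (w' i) ^ 2 = ∑ j ∈ T, (w' j) ^ 2 := by
    rw [Finset.sum_subset (Finset.subset_univ T) (fun x _ hx => by rw [hTsupp x hx]; ring)]
  have hB1 : ∑ i, W i * h i = ∑ j ∈ T, w' j * h (ψ j) := by
    have : ∀ i, W i * h i = ∑ j ∈ T, if ψ j = i then w' j * h i else 0 := by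
      intro i
      rw [hWdef, Finset.sum_mul]
      apply Finset.sum_congr rfl
      intro j _
      split <;> ring
    rw [Finset.sum_congr rfl (fun i _ => this i), Finset.sum_comm]
    apply Finset.sum_congr rfl
    intro j _
    rw [Finset.sum_ite_eq Finset.univ (ψ j) (fun i => w' j * h i)]
    simp
  have hB2 : ∑ i, w' i * h i = ∑ j ∈ T, w' j * h j := by
    rw [Finset.sum_subset (Finset.subset_univ T) (fun x _ hx => by rw [hTsupp x hx]; ring)]
  have hC : ∑ j ∈ T, w' j * h j ≤ ∑ j ∈ T, w' j * h (ψ j) := by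
    apply Finset.sum_le_sum
    intro j hj
    exact mul_le_mul_of_nonneg_left (hψh j hj) (hw'bdd j).1
  -- expansion of objective
  have expand : ∀ v : Fin n → ℝ,
      ∑ i, (v i - h i) ^ 2 = ∑ i, (v i) ^ 2 - 2 * ∑ i, v i * h i + ∑ i, (h i) ^ 2 := by
    intro v
    rw [Finset.mul_sum, ← Finset.sum_sub_distrib, ← Finset.sum_add_distrib]
    exact Finset.sum_congr rfl fun i _ => by ring
  have hWle : ∑ i, (W i - h i) ^ 2 ≤ ∑ i, (w' i - h i) ^ 2 := by
    rw [expand W, expand w']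
    rw [hA1, hA2, hB1, hB2]
    linarith
  -- apply minimality of u on S
  have hmin := hu_min W hWsumS (fun i _ => ⟨hW_nonneg i, hW_le i⟩)
  have hcompl : ∑ i ∈ Sᶜ, (u i - h i) ^ 2 = ∑ i ∈ Sᶜ, (W i - h i) ^ 2 := by
    apply Finset.sum_congr rfl
    intro i hi
    have hi' : i ∉ S := Finset.mem_compl.mp hi
    rw [hu_supp i hi', hW_zero_off i hi']
  have hsplit_u : ∑ i, (u i - h i) ^ 2 = ∑ i ∈ S, (u i - h i) ^ 2 + ∑ i ∈ Sᶜ, (u i - h i) ^ 2 :=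
    (Finset.sum_add_sum_compl S _).symm
  have hsplit_W : ∑ i, (W i - h i) ^ 2 = ∑ i ∈ S, (W i - h i) ^ 2 + ∑ i ∈ Sᶜ, (W i - h i) ^ 2 :=
    (Finset.sum_add_sum_compl S _).symm
  calc ∑ i, (u i - h i) ^ 2 ≤ ∑ i, (W i - h i) ^ 2 := by
        rw [hsplit_u, hsplit_W, hcompl]; linarith
    _ ≤ ∑ i, (w' i - h i) ^ 2 := hWle
end

section
/- Let n ≥ 2, s ∈ {1,…,n}, t ∈ (0,1] with s·t ≥ 1, and let h ∈ ℝⁿ. Then there exists a minimizer w of ‖w′ − h‖₂² over the sparse unit-capped simplex Δ⁺_{t,ℓ₀} whose support is contained in a set of indices of the s largest entries of h. More precisely, if w is any minimizer, i is an index among the s largest entries of h with w_i = 0, j is an index not among the s largest entries of h with w_j > 0, then the vector w̃ obtained from w by setting w̃_j = 0 and w̃_i = w_j (all other entries unchanged) lies in Δ⁺_{t,ℓ₀} and satisfies ‖w̃ − h‖₂² ≤ ‖w − h‖₂². -/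
lemma exists_topSet (n : ℕ) (h : Fin n → ℝ) :
    ∀ s, s ≤ n → ∃ S : Finset (Fin n), S.card = s ∧ ∀ i ∈ S, ∀ j ∉ S, h j ≤ h i := by
  intro s
  induction s with
  | zero => exact fun _ => ⟨∅, rfl, by simp⟩
  | succ s ih =>
    intro hsn
    obtain ⟨S, hcard, hS⟩ := ih (Nat.le_of_succ_le hsn)
    have hne : Sᶜ.Nonempty := by
      rw [← Finset.card_pos, Finset.card_compl, hcard]
      simp only [Fintype.card_fin]
      omega
    obtain ⟨j, hjc, hjmax⟩ := Finset.exists_max_image Sᶜ h hne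
    have hjS : j ∉ S := Finset.mem_compl.mp hjc
    refine ⟨insert j S, by rw [Finset.card_insert_of_notMem hjS, hcard], ?_⟩
    intro i hi j' hj'
    have hj'S : j' ∉ S := fun hh => hj' (Finset.mem_insert_of_mem hh)
    rcases Finset.mem_insert.mp hi with rfl | hi
    · exact hjmax j' (Finset.mem_compl.mpr hj'S)
    · exact hS i hi j' hj'S

lemma swap_lemma (n s : ℕ) (t : ℝ) (h w : Fin n → ℝ)
    (hw : w ∈ sparseCappedSimplex n t s) (i j : Fin n) (hij : i ≠ j)
    (hwi : w i = 0) (hwj : w j ≠ 0) (hle : h j ≤ h i) :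
    Function.update (Function.update w j 0) i (w j) ∈ sparseCappedSimplex n t s ∧
    ∑ l, (Function.update (Function.update w j 0) i (w j) l - h l) ^ 2 ≤
      ∑ l, (w l - h l) ^ 2 := by
  obtain ⟨hsum, hbd, S₀, hS₀card, hS₀z⟩ := hw
  set w' := Function.update (Function.update w j 0) i (w j) with hw'def
  have hw'l : ∀ l, w' l = if l = i then w j else if l = j then 0 else w l := by
    intro l
    simp [hw'def, Function.update_apply]
  have key : ∀ l, w' l = w l + (if l = i then w j else 0) - (if l = j then w j else 0) := by
    intro l
    by_cases h1 : l = i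
    · subst h1; simp [hw'l, hwi, hij]
    · by_cases h2 : l = j
      · subst h2; simp [hw'l, h1]
      · simp [hw'l, h1, h2]
  have hsum' : (∑ l, w' l) = 1 := by
    simp only [key]
    rw [Finset.sum_sub_distrib, Finset.sum_add_distrib]
    simp [Finset.sum_ite_eq', hsum]
  have hjS₀ : j ∈ S₀ := by
    by_contra hc
    exact hwj (hS₀z j hc)
  refine ⟨⟨hsum', ?_, ?_⟩, ?_⟩
  · intro l
    rw [hw'l]
    split_ifs with h1 h2
    · exact hbd j
    · exact ⟨le_refl 0, le_trans (hbd j).1 (hbd j).2⟩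
    · exact hbd l
  · refine ⟨insert i (S₀.erase j), ?_, ?_⟩
    · have h1 := Finset.card_insert_le i (S₀.erase j)
      have h2 := Finset.card_erase_of_mem hjS₀
      have h3 := Finset.card_pos.mpr ⟨j, hjS₀⟩
      omega
    · intro l hl
      have hli : l ≠ i := by rintro rfl; exact hl (Finset.mem_insert_self _ _)
      rw [hw'l]
      simp only [hli, if_false]
      by_cases h2 : l = j
      · simp [h2]
      · simp only [h2, if_false]
        apply hS₀z
        intro hlS₀
        exact hl (Finset.mem_insert_of_mem (Finset.mem_erase.mpr ⟨h2, hlS₀⟩))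
  · have keyq : ∀ l, (w' l - h l) ^ 2 = (w l - h l) ^ 2 +
        (if l = i then w j ^ 2 - 2 * w j * h i else 0) +
        (if l = j then 2 * w j * h j - w j ^ 2 else 0) := by
      intro l
      rw [hw'l]
      by_cases h1 : l = i
      · subst h1
        rw [if_pos rfl, if_pos rfl, if_neg hij, hwi]
        ring
      · rw [if_neg h1, if_neg h1]
        by_cases h2 : l = j
        · subst h2
          rw [if_pos rfl, if_pos rfl]
          ring
        · rw [if_neg h2, if_neg h2]
          ring
    simp only [keyq]
    rw [Finset.sum_add_distrib, Finset.sum_add_distrib]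
    rw [Finset.sum_ite_eq' Finset.univ i, Finset.sum_ite_eq' Finset.univ j]
    simp only [Finset.mem_univ, if_pos]
    have hwj0 : 0 ≤ w j := (hbd j).1
    nlinarith [mul_nonneg hwj0 (sub_nonneg.mpr hle)]

lemma compact_simplex (n s : ℕ) (t : ℝ) : IsCompact (sparseCappedSimplex n t s) := by
  have hK : ∀ S : Finset (Fin n), IsCompact
      {w : Fin n → ℝ | (∑ i, w i) = 1 ∧ (∀ i, 0 ≤ w i ∧ w i ≤ t) ∧ ∀ i ∉ S, w i = 0} := by
    intro S
    have hsub : {w : Fin n → ℝ | (∑ i, w i) = 1 ∧ (∀ i, 0 ≤ w i ∧ w i ≤ t) ∧ ∀ i ∉ S, w i = 0}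
        ⊆ Set.pi Set.univ (fun _ : Fin n => Set.Icc 0 t) := by
      intro w hw l _
      exact ⟨(hw.2.1 l).1, (hw.2.1 l).2⟩
    have hclosed : IsClosed {w : Fin n → ℝ | (∑ i, w i) = 1 ∧ (∀ i, 0 ≤ w i ∧ w i ≤ t)
        ∧ ∀ i ∉ S, w i = 0} := by
      have heq : {w : Fin n → ℝ | (∑ i, w i) = 1 ∧ (∀ i, 0 ≤ w i ∧ w i ≤ t)
          ∧ ∀ i ∉ S, w i = 0} =
          {w : Fin n → ℝ | (∑ i, w i) = 1} ∩
          ((⋂ i, {w : Fin n → ℝ | w i ∈ Set.Icc 0 t}) ∩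
           (⋂ (i) (_ : i ∉ S), {w : Fin n → ℝ | w i = 0})) := by
        ext w
        simp [Set.mem_Icc, forall_and]
      rw [heq]
      refine (isClosed_eq (by continuity) continuous_const).inter (IsClosed.inter ?_ ?_)
      · exact isClosed_iInter fun i => IsClosed.preimage (continuous_apply i) isClosed_Icc
      · exact isClosed_iInter fun i => isClosed_iInter fun _ =>
          isClosed_eq (continuous_apply i) continuous_const
    exact IsCompact.of_isClosed_subset
      (isCompact_univ_pi fun _ => isCompact_Icc) hclosed hsub
  have heq : sparseCappedSimplex n t s =
      ⋃ S ∈ {S : Finset (Fin n) | S.card ≤ s},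
        {w : Fin n → ℝ | (∑ i, w i) = 1 ∧ (∀ i, 0 ≤ w i ∧ w i ≤ t) ∧ ∀ i ∉ S, w i = 0} := by
    ext w
    simp only [sparseCappedSimplex, Set.mem_setOf_eq, Set.mem_iUnion]
    constructor
    · rintro ⟨h1, h2, S, hc, hz⟩
      exact ⟨S, hc, h1, h2, hz⟩
    · rintro ⟨S, hc, h1, h2, hz⟩
      exact ⟨h1, h2, S, hc, hz⟩
  rw [heq]
  exact Set.Finite.isCompact_biUnion (Set.toFinite _) fun S _ => hK S

lemma nonempty_simplex (n s : ℕ) (t : ℝ) (hs1 : 1 ≤ s) (hsn : s ≤ n)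
    (ht0 : 0 < t) (hst : 1 ≤ (s : ℝ) * t) :
    (sparseCappedSimplex n t s).Nonempty := by
  obtain ⟨S, hcard, -⟩ := exists_topSet n 0 s hsn
  have hs0 : (0 : ℝ) < s := by exact_mod_cast hs1
  refine ⟨fun l => if l ∈ S then (s : ℝ)⁻¹ else 0, ?_, ?_, ⟨S, le_of_eq hcard, ?_⟩⟩
  · rw [Finset.sum_ite_mem, Finset.univ_inter, Finset.sum_const, hcard, nsmul_eq_mul]
    field_simp
  · intro l
    by_cases hl : l ∈ S
    · simp only [hl, if_pos]
      refine ⟨by positivity, ?_⟩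
      rw [inv_le_iff_one_le_mul₀ hs0]
      linarith
    · simp [hl, le_of_lt ht0]
  · intro l hl
    simp [hl]

lemma exists_min (n s : ℕ) (t : ℝ) (hs1 : 1 ≤ s) (hsn : s ≤ n)
    (ht0 : 0 < t) (hst : 1 ≤ (s : ℝ) * t) (h : Fin n → ℝ) :
    ∃ w ∈ sparseCappedSimplex n t s,
      ∀ w' ∈ sparseCappedSimplex n t s, ∑ l, (w l - h l) ^ 2 ≤ ∑ l, (w' l - h l) ^ 2 := by
  have hcont : Continuous fun w : Fin n → ℝ => ∑ l, (w l - h l) ^ 2 := by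
    apply continuous_finset_sum
    intro l _
    exact ((continuous_apply l).sub continuous_const).pow 2
  obtain ⟨w, hwmem, hwmin⟩ := (compact_simplex n s t).exists_isMinOn
    (nonempty_simplex n s t hs1 hsn ht0 hst) hcont.continuousOn
  exact ⟨w, hwmem, fun w' hw' => hwmin hw'⟩

lemma move_support (n s : ℕ) (t : ℝ) (h : Fin n → ℝ) (S : Finset (Fin n))
    (hcard : S.card = s) (hprop : ∀ i ∈ S, ∀ j ∉ S, h j ≤ h i) :
    ∀ k : ℕ, ∀ w ∈ sparseCappedSimplex n t s,
      (∀ w' ∈ sparseCappedSimplex n t s, ∑ l, (w l - h l) ^ 2 ≤ ∑ l, (w' l - h l) ^ 2) →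
      ((Finset.univ.filter fun l => w l ≠ 0) \ S).card ≤ k →
      ∃ w₀ ∈ sparseCappedSimplex n t s,
        (∀ w' ∈ sparseCappedSimplex n t s, ∑ l, (w₀ l - h l) ^ 2 ≤ ∑ l, (w' l - h l) ^ 2) ∧
        ∀ i, w₀ i ≠ 0 → i ∈ S := by
  intro k
  induction k with
  | zero =>
    intro w hw hmin hk
    refine ⟨w, hw, hmin, fun i hi => ?_⟩
    by_contra hiS
    have : i ∈ (Finset.univ.filter fun l => w l ≠ 0) \ S :=
      Finset.mem_sdiff.mpr ⟨Finset.mem_filter.mpr ⟨Finset.mem_univ i, hi⟩, hiS⟩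
    have := Finset.card_pos.mpr ⟨i, this⟩
    omega
  | succ k ih =>
    intro w hw hmin hk
    by_cases hE : ((Finset.univ.filter fun l => w l ≠ 0) \ S) = ∅
    · refine ⟨w, hw, hmin, fun i hi => ?_⟩
      by_contra hiS
      exact absurd hE (Finset.ne_empty_of_mem
        (Finset.mem_sdiff.mpr ⟨Finset.mem_filter.mpr ⟨Finset.mem_univ i, hi⟩, hiS⟩))
    · obtain ⟨j, hj⟩ := Finset.nonempty_iff_ne_empty.mpr hE
      rw [Finset.mem_sdiff, Finset.mem_filter] at hj
      obtain ⟨⟨-, hwj⟩, hjS⟩ := hj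
      -- find i ∈ S with w i = 0
      have hi : ∃ i ∈ S, w i = 0 := by
        by_contra hA
        push_neg at hA
        obtain ⟨-, -, S₀, hS₀c, hS₀z⟩ := hw
        have hsub : insert j S ⊆ S₀ := by
          intro l hl
          rcases Finset.mem_insert.mp hl with rfl | hl
          · by_contra hc; exact hwj (hS₀z l hc)
          · by_contra hc; exact hA l hl (hS₀z l hc)
        have := Finset.card_le_card hsub
        rw [Finset.card_insert_of_notMem hjS, hcard] at this
        omega
      obtain ⟨i, hiS, hwi⟩ := hi
      have hij : i ≠ j := fun e => hjS (e ▸ hiS)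
      obtain ⟨hmem', hobj⟩ := swap_lemma n s t h w hw i j hij hwi hwj (hprop i hiS j hjS)
      set w₁ := Function.update (Function.update w j 0) i (w j) with hw₁def
      have hmin' : ∀ w' ∈ sparseCappedSimplex n t s,
          ∑ l, (w₁ l - h l) ^ 2 ≤ ∑ l, (w' l - h l) ^ 2 :=
        fun w' hw' => le_trans hobj (hmin w' hw')
      have hw₁l : ∀ l, w₁ l = if l = i then w j else if l = j then 0 else w l := by
        intro l
        simp [hw₁def, Function.update_apply]
      have hsub : (Finset.univ.filter fun l => w₁ l ≠ 0) \ S ⊆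
          ((Finset.univ.filter fun l => w l ≠ 0) \ S).erase j := by
        intro l hl
        rw [Finset.mem_sdiff, Finset.mem_filter] at hl
        obtain ⟨⟨-, hl1⟩, hl2⟩ := hl
        have hli : l ≠ i := by rintro rfl; exact hl2 hiS
        have hlj : l ≠ j := by
          rintro rfl
          rw [hw₁l] at hl1
          simp [hli] at hl1
        refine Finset.mem_erase.mpr ⟨hlj, Finset.mem_sdiff.mpr
          ⟨Finset.mem_filter.mpr ⟨Finset.mem_univ l, ?_⟩, hl2⟩⟩
        rw [hw₁l, if_neg hli, if_neg hlj] at hl1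
        exact hl1
      have hjmem : j ∈ (Finset.univ.filter fun l => w l ≠ 0) \ S :=
        Finset.mem_sdiff.mpr ⟨Finset.mem_filter.mpr ⟨Finset.mem_univ j, hwj⟩, hjS⟩
      have hcount : ((Finset.univ.filter fun l => w₁ l ≠ 0) \ S).card ≤ k := by
        have h1 := Finset.card_le_card hsub
        have h2 := Finset.card_erase_of_mem hjmem
        have h3 := Finset.card_pos.mpr ⟨j, hjmem⟩
        omega
      exact ih w₁ hmem' hmin' hcount

/-- Some minimizer of `‖w' - h‖₂²` over the sparse unit-capped simplex has support contained in a
set of indices of the `s` largest entries of `h`; more precisely, swapping any positive weight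
placed off the `s` largest entries onto a zero weight among the `s` largest entries stays in the
set and does not increase the squared Euclidean distance to `h`. -/
theorem stmt3 (n s : ℕ) (t : ℝ) (hn : 2 ≤ n) (hs1 : 1 ≤ s) (hsn : s ≤ n)
    (ht0 : 0 < t) (ht1 : t ≤ 1) (hst : 1 ≤ (s : ℝ) * t) (h : Fin n → ℝ) :
    (∃ w ∈ sparseCappedSimplex n t s,
      (∀ w' ∈ sparseCappedSimplex n t s, ∑ l, (w l - h l) ^ 2 ≤ ∑ l, (w' l - h l) ^ 2) ∧
      ∃ S : Finset (Fin n), S.card = s ∧ (∀ i ∈ S, ∀ j ∉ S, h j ≤ h i) ∧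
        ∀ i, w i ≠ 0 → i ∈ S) ∧
    (∀ w ∈ sparseCappedSimplex n t s,
      (∀ w' ∈ sparseCappedSimplex n t s, ∑ l, (w l - h l) ^ 2 ≤ ∑ l, (w' l - h l) ^ 2) →
      ∀ S : Finset (Fin n), S.card = s → (∀ i ∈ S, ∀ j ∉ S, h j ≤ h i) →
      ∀ i ∈ S, w i = 0 →
      ∀ j ∉ S, 0 < w j →
        Function.update (Function.update w j 0) i (w j) ∈ sparseCappedSimplex n t s ∧
        ∑ l, (Function.update (Function.update w j 0) i (w j) l - h l) ^ 2 ≤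
          ∑ l, (w l - h l) ^ 2) := by
  constructor
  · obtain ⟨S, hcard, hprop⟩ := exists_topSet n h s hsn
    obtain ⟨w, hw, hmin⟩ := exists_min n s t hs1 hsn ht0 hst h
    obtain ⟨w₀, hw₀, hmin₀, hsupp⟩ := move_support n s t h S hcard hprop
      ((Finset.univ.filter fun l => w l ≠ 0) \ S).card w hw hmin le_rfl
    exact ⟨w₀, hw₀, hmin₀, S, hcard, hprop, hsupp⟩
  · intro w hw hmin S hcard hprop i hiS hwi j hjS hwj
    have hij : i ≠ j := fun e => hjS (e ▸ hiS)
    exact swap_lemma n s t h w hw i j hij hwi (ne_of_gt hwj) (hprop i hiS j hjS)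
end
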